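/- arXiv:2508.16904 — 2 statements merged into one kernel-verified Lean document; each statement's English description precedes it below -/
import Mathlib

section
/- Let g : (c_*, u_max) → (0, c_*) be the map sending each supersonic state u₋ to its unique Rankine–Hugoniot partner u₊ = g(u₋), characterized by ρ(g(u₋))·g(u₋) = ρ(u₋)·u₋. Then g is differentiable on (c_*, u_max), and for every u₋ ∈ (c_*, u_max), writing u₊ = g(u₋), one has g′(u₋) = ((c(u₋)² − u₋²)·u₋^{γ−2}) / ((c(u₊)² − u₊²)·u₊^{γ−2}) < 0; in particular g is strictly decreasing. -/
open Real Set Filter Topology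

/-- Maximal speed `u_max = √(2c₀²/(γ−1))`. -/
noncomputable def uMax (γ c₀ : ℝ) : ℝ := Real.sqrt (2 * c₀ ^ 2 / (γ - 1))

/-- Critical (sonic) speed `c_* = √(2c₀²/(γ+1))`. -/
noncomputable def cStar (γ c₀ : ℝ) : ℝ := Real.sqrt (2 * c₀ ^ 2 / (γ + 1))

/-- Local sonic speed `c(u) = √(c₀² − ((γ−1)/2)u²)`. -/
noncomputable def sonic (γ c₀ u : ℝ) : ℝ := Real.sqrt (c₀ ^ 2 - (γ - 1) / 2 * u ^ 2)

/-- Density `ρ(u) = ((c₀² − ((γ−1)/2)u²)/γ)^{1/(γ−1)}`. -/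
noncomputable def dens (γ c₀ u : ℝ) : ℝ :=
  ((c₀ ^ 2 - (γ - 1) / 2 * u ^ 2) / γ) ^ ((1 : ℝ) / (γ - 1))

/-- Mass flux `F(u) = ρ(u)·u`. -/
noncomputable def flux (γ c₀ u : ℝ) : ℝ := dens γ c₀ u * u

/-- Pressure `p(u) = ρ(u)^γ`. -/
noncomputable def pres (γ c₀ u : ℝ) : ℝ := dens γ c₀ u ^ γ

lemma flux_hasDerivAt (γ c₀ u : ℝ) (hγ : 1 < γ)
    (hA : 0 < c₀ ^ 2 - (γ - 1) / 2 * u ^ 2) :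
    HasDerivAt (flux γ c₀)
      (((c₀ ^ 2 - (γ - 1) / 2 * u ^ 2 - u ^ 2) / γ) *
        ((c₀ ^ 2 - (γ - 1) / 2 * u ^ 2) / γ) ^ ((2 - γ) / (γ - 1))) u := by
  have hγ0 : (0:ℝ) < γ := by linarith
  have hγ1 : γ - 1 ≠ 0 := by linarith
  have hB : 0 < (c₀ ^ 2 - (γ - 1) / 2 * u ^ 2) / γ := by positivity
  have h1 : HasDerivAt (fun v => (c₀ ^ 2 - (γ - 1) / 2 * v ^ 2) / γ)
      ((-(γ - 1) * u) / γ) u := by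
    have := (((hasDerivAt_pow 2 u).const_mul ((γ - 1) / 2)).const_sub (c₀ ^ 2)).div_const γ
    refine this.congr_deriv ?_
    ring
  have h2 := h1.rpow_const (p := (1:ℝ)/(γ-1)) (Or.inl hB.ne')
  have h3 := h2.mul (hasDerivAt_id u)
  have hfl : flux γ c₀ = fun v => ((c₀ ^ 2 - (γ - 1) / 2 * v ^ 2) / γ) ^ ((1:ℝ)/(γ-1)) * v := rfl
  rw [hfl]
  refine h3.congr_deriv ?_
  symm
  have he : (1:ℝ)/(γ-1) - 1 = (2-γ)/(γ-1) := by field_simp; ring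
  have he2 : (1:ℝ)/(γ-1) = (2-γ)/(γ-1) + 1 := by field_simp; ring
  rw [he, he2, Real.rpow_add hB, Real.rpow_one, id_eq]
  set E := ((c₀ ^ 2 - (γ - 1) / 2 * u ^ 2) / γ) ^ ((2 - γ) / (γ - 1))
  field_simp
  ring


/-- differentiability and strict monotonicity of the Rankine–Hugoniot partner
map `g : (c_*, u_max) → (0, c_*)`, with
`g′(u₋) = ((c(u₋)² − u₋²)u₋^{γ−2}) / ((c(u₊)² − u₊²)u₊^{γ−2}) < 0` where `u₊ = g(u₋)`. -/
theorem rankine_hugoniot_partner_derivative (γ c₀ : ℝ) (hγ : 1 < γ) (hc₀ : 0 < c₀)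
    (g : ℝ → ℝ)
    (hg : ∀ um ∈ Set.Ioo (cStar γ c₀) (uMax γ c₀),
      g um ∈ Set.Ioo 0 (cStar γ c₀) ∧ dens γ c₀ (g um) * g um = dens γ c₀ um * um) :
    (∀ um ∈ Set.Ioo (cStar γ c₀) (uMax γ c₀),
      HasDerivAt g
        ((sonic γ c₀ um ^ 2 - um ^ 2) * um ^ (γ - 2) /
          ((sonic γ c₀ (g um) ^ 2 - (g um) ^ 2) * (g um) ^ (γ - 2))) um ∧
      (sonic γ c₀ um ^ 2 - um ^ 2) * um ^ (γ - 2) /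
          ((sonic γ c₀ (g um) ^ 2 - (g um) ^ 2) * (g um) ^ (γ - 2)) < 0) ∧
    StrictAntiOn g (Set.Ioo (cStar γ c₀) (uMax γ c₀)) := by
  have hγ0 : (0:ℝ) < γ := by linarith
  have hγ1 : γ - 1 ≠ 0 := by linarith
  have hcs2 : cStar γ c₀ ^ 2 = 2 * c₀ ^ 2 / (γ + 1) := Real.sq_sqrt (by positivity)
  have hum2 : uMax γ c₀ ^ 2 = 2 * c₀ ^ 2 / (γ - 1) :=
    Real.sq_sqrt (div_nonneg (by positivity) (by linarith))
  have hcs_pos : 0 < cStar γ c₀ := Real.sqrt_pos.2 (by positivity)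
  have hA_Icc : ∀ u ∈ Icc 0 (cStar γ c₀), 0 < c₀ ^ 2 - (γ - 1) / 2 * u ^ 2 := by
    intro u hu
    have h2 : u ^ 2 ≤ cStar γ c₀ ^ 2 := by nlinarith [hu.1, hu.2]
    rw [hcs2] at h2
    have hγp : 0 < γ + 1 := by linarith
    rw [le_div_iff₀ hγp] at h2
    nlinarith
  have hN_Ioo : ∀ u ∈ Ioo 0 (cStar γ c₀), 0 < c₀ ^ 2 - (γ - 1) / 2 * u ^ 2 - u ^ 2 := by
    intro u hu
    have h2 : u ^ 2 < cStar γ c₀ ^ 2 := by nlinarith [hu.1, hu.2]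
    rw [hcs2, lt_div_iff₀ (by linarith : (0:ℝ) < γ + 1)] at h2
    nlinarith
  have hA_sup : ∀ u ∈ Ioo (cStar γ c₀) (uMax γ c₀),
      0 < c₀ ^ 2 - (γ - 1) / 2 * u ^ 2 ∧ c₀ ^ 2 - (γ - 1) / 2 * u ^ 2 - u ^ 2 < 0 := by
    intro u hu
    have hu0 : 0 < u := lt_trans hcs_pos hu.1
    have h2 : u ^ 2 < uMax γ c₀ ^ 2 := by nlinarith [hu.2]
    have h3 : cStar γ c₀ ^ 2 < u ^ 2 := by nlinarith [hu.1]
    rw [hum2, lt_div_iff₀ (by linarith : (0:ℝ) < γ - 1)] at h2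
    rw [hcs2, div_lt_iff₀ (by linarith : (0:ℝ) < γ + 1)] at h3
    constructor <;> nlinarith
  have hmono : StrictMonoOn (flux γ c₀) (Icc 0 (cStar γ c₀)) := by
    apply strictMonoOn_of_deriv_pos (convex_Icc _ _)
    · intro x hx
      exact (flux_hasDerivAt γ c₀ x hγ (hA_Icc x hx)).continuousAt.continuousWithinAt
    · intro x hx
      rw [interior_Icc] at hx
      have hx' : x ∈ Icc 0 (cStar γ c₀) := Ioo_subset_Icc_self hx
      rw [(flux_hasDerivAt γ c₀ x hγ (hA_Icc x hx')).deriv]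
      have h1 := hN_Ioo x hx
      have hB : 0 < (c₀ ^ 2 - (γ - 1) / 2 * x ^ 2) / γ := div_pos (hA_Icc x hx') hγ0
      exact mul_pos (div_pos h1 hγ0) (Real.rpow_pos_of_pos hB _)
  have main : ∀ um ∈ Set.Ioo (cStar γ c₀) (uMax γ c₀),
      HasDerivAt g
        ((sonic γ c₀ um ^ 2 - um ^ 2) * um ^ (γ - 2) /
          ((sonic γ c₀ (g um) ^ 2 - (g um) ^ 2) * (g um) ^ (γ - 2))) um ∧
      (sonic γ c₀ um ^ 2 - um ^ 2) * um ^ (γ - 2) /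
          ((sonic γ c₀ (g um) ^ 2 - (g um) ^ 2) * (g um) ^ (γ - 2)) < 0 := by
    intro um hum
    obtain ⟨hup, heq⟩ := hg um hum
    set up := g um with hupdef
    have hum0 : 0 < um := lt_trans hcs_pos hum.1
    have hup0 : 0 < up := hup.1
    obtain ⟨hAm, hNm⟩ := hA_sup um hum
    have hAp : 0 < c₀ ^ 2 - (γ - 1) / 2 * up ^ 2 := hA_Icc up ⟨hup.1.le, hup.2.le⟩
    have hNp : 0 < c₀ ^ 2 - (γ - 1) / 2 * up ^ 2 - up ^ 2 := hN_Ioo up hup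
    have hBm : 0 < (c₀ ^ 2 - (γ - 1) / 2 * um ^ 2) / γ := div_pos hAm hγ0
    have hBp : 0 < (c₀ ^ 2 - (γ - 1) / 2 * up ^ 2) / γ := div_pos hAp hγ0
    have hFm := flux_hasDerivAt γ c₀ um hγ hAm
    have hFp := flux_hasDerivAt γ c₀ up hγ hAp
    set Dm := ((c₀ ^ 2 - (γ - 1) / 2 * um ^ 2 - um ^ 2) / γ) *
        ((c₀ ^ 2 - (γ - 1) / 2 * um ^ 2) / γ) ^ ((2 - γ) / (γ - 1)) with hDm
    set Dp := ((c₀ ^ 2 - (γ - 1) / 2 * up ^ 2 - up ^ 2) / γ) *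
        ((c₀ ^ 2 - (γ - 1) / 2 * up ^ 2) / γ) ^ ((2 - γ) / (γ - 1)) with hDp
    have hDppos : 0 < Dp := mul_pos (div_pos hNp hγ0) (Real.rpow_pos_of_pos hBp _)
    have hDmneg : Dm < 0 :=
      mul_neg_of_neg_of_pos (div_neg_of_neg_of_pos hNm hγ0) (Real.rpow_pos_of_pos hBm _)
    have hCD : ContDiffAt ℝ 1 (flux γ c₀) up := by
      have h1 : ContDiffAt ℝ 1 (fun v : ℝ => (c₀ ^ 2 - (γ - 1) / 2 * v ^ 2) / γ) up :=
        ((contDiffAt_const.sub (contDiffAt_const.mul (contDiffAt_id.pow 2))).div_const γ)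
      exact (h1.rpow_const_of_ne hBp.ne').mul contDiffAt_id
    have hstrict : HasStrictDerivAt (flux γ c₀) Dp up := hCD.hasStrictDerivAt' hFp one_ne_zero
    set φ := hstrict.localInverse (flux γ c₀) Dp up hDppos.ne' with hφdef
    have hfeq : flux γ c₀ up = flux γ c₀ um := heq
    have hFtend : Tendsto (flux γ c₀) (𝓝 um) (𝓝 (flux γ c₀ up)) := by
      rw [hfeq]; exact hFm.continuousAt
    have hright : ∀ᶠ x in 𝓝 um, flux γ c₀ (φ (flux γ c₀ x)) = flux γ c₀ x :=
      hFtend.eventually (hstrict.hasStrictFDerivAt_equiv hDppos.ne').eventually_right_inverse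
    have hφF_up : φ (flux γ c₀ up) = up :=
      (hstrict.hasStrictFDerivAt_equiv hDppos.ne').localInverse_apply_image
    have hφtend : Tendsto (fun x => φ (flux γ c₀ x)) (𝓝 um) (𝓝 up) := by
      have hc : ContinuousAt φ (flux γ c₀ up) :=
        (hstrict.hasStrictFDerivAt_equiv hDppos.ne').localInverse_continuousAt
      have := hc.tendsto.comp hFtend
      rwa [hφF_up] at this
    have hmem : ∀ᶠ x in 𝓝 um, φ (flux γ c₀ x) ∈ Ioo 0 (cStar γ c₀) :=
      hφtend.eventually (isOpen_Ioo.eventually_mem hup)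
    have hIoo : ∀ᶠ x in 𝓝 um, x ∈ Ioo (cStar γ c₀) (uMax γ c₀) :=
      isOpen_Ioo.eventually_mem hum
    have hgf : g =ᶠ[𝓝 um] fun x => φ (flux γ c₀ x) := by
      filter_upwards [hright, hmem, hIoo] with x h1 h2 h3
      obtain ⟨hgx, hgeq⟩ := hg x h3
      have hfx : flux γ c₀ (g x) = flux γ c₀ (φ (flux γ c₀ x)) := by
        rw [h1]; exact hgeq
      exact hmono.injOn (Ioo_subset_Icc_self hgx) (Ioo_subset_Icc_self h2) hfx
    have hφd : HasDerivAt φ Dp⁻¹ (flux γ c₀ um) := by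
      rw [← hfeq]; exact (hstrict.to_localInverse hDppos.ne').hasDerivAt
    have hcomp : HasDerivAt (fun x => φ (flux γ c₀ x)) (Dp⁻¹ * Dm) um := hφd.comp um hFm
    have hgder : HasDerivAt g (Dp⁻¹ * Dm) um := hcomp.congr_of_eventuallyEq hgf
    -- key rpow identity
    have hρeq : ((c₀ ^ 2 - (γ - 1) / 2 * up ^ 2) / γ) ^ ((1:ℝ)/(γ-1)) * up
        = ((c₀ ^ 2 - (γ - 1) / 2 * um ^ 2) / γ) ^ ((1:ℝ)/(γ-1)) * um := heq
    have hρm : (0:ℝ) < ((c₀ ^ 2 - (γ - 1) / 2 * um ^ 2) / γ) ^ ((1:ℝ)/(γ-1)) :=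
      Real.rpow_pos_of_pos hBm _
    have hρp : (0:ℝ) < ((c₀ ^ 2 - (γ - 1) / 2 * up ^ 2) / γ) ^ ((1:ℝ)/(γ-1)) :=
      Real.rpow_pos_of_pos hBp _
    have hdiv : up / ((c₀ ^ 2 - (γ - 1) / 2 * um ^ 2) / γ) ^ ((1:ℝ)/(γ-1))
        = um / ((c₀ ^ 2 - (γ - 1) / 2 * up ^ 2) / γ) ^ ((1:ℝ)/(γ-1)) := by
      rw [div_eq_div_iff hρm.ne' hρp.ne']
      linarith [hρeq]
    have hexp : ∀ B : ℝ, 0 < B → B ^ ((2-γ)/(γ-1)) = (B ^ ((1:ℝ)/(γ-1))) ^ (-(γ-2)) := by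
      intro B hB
      rw [← Real.rpow_mul hB.le]
      congr 1
      field_simp
      ring
    have key : ((c₀ ^ 2 - (γ - 1) / 2 * um ^ 2) / γ) ^ ((2-γ)/(γ-1)) * up ^ (γ-2)
        = ((c₀ ^ 2 - (γ - 1) / 2 * up ^ 2) / γ) ^ ((2-γ)/(γ-1)) * um ^ (γ-2) := by
      rw [hexp _ hBm, hexp _ hBp, Real.rpow_neg hρm.le, Real.rpow_neg hρp.le]
      have l1 : ((((c₀ ^ 2 - (γ - 1) / 2 * um ^ 2) / γ) ^ ((1:ℝ)/(γ-1))) ^ (γ-2))⁻¹ * up ^ (γ-2)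
          = (up / ((c₀ ^ 2 - (γ - 1) / 2 * um ^ 2) / γ) ^ ((1:ℝ)/(γ-1))) ^ (γ-2) := by
        rw [Real.div_rpow hup0.le hρm.le]; exact inv_mul_eq_div _ _
      have l2 : ((((c₀ ^ 2 - (γ - 1) / 2 * up ^ 2) / γ) ^ ((1:ℝ)/(γ-1))) ^ (γ-2))⁻¹ * um ^ (γ-2)
          = (um / ((c₀ ^ 2 - (γ - 1) / 2 * up ^ 2) / γ) ^ ((1:ℝ)/(γ-1))) ^ (γ-2) := by
        rw [Real.div_rpow hum0.le hρp.le]; exact inv_mul_eq_div _ _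
      rw [l1, l2, hdiv]
    have hsonm : sonic γ c₀ um ^ 2 = c₀ ^ 2 - (γ - 1) / 2 * um ^ 2 := Real.sq_sqrt hAm.le
    have hsonp : sonic γ c₀ up ^ 2 = c₀ ^ 2 - (γ - 1) / 2 * up ^ 2 := Real.sq_sqrt hAp.le
    have humpow : (0:ℝ) < um ^ (γ-2) := Real.rpow_pos_of_pos hum0 _
    have huppow : (0:ℝ) < up ^ (γ-2) := Real.rpow_pos_of_pos hup0 _
    have hval : Dp⁻¹ * Dm =
        (sonic γ c₀ um ^ 2 - um ^ 2) * um ^ (γ - 2) /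
          ((sonic γ c₀ up ^ 2 - up ^ 2) * up ^ (γ - 2)) := by
      rw [hsonm, hsonp, inv_mul_eq_div, hDm, hDp]
      rw [div_eq_div_iff hDppos.ne' (mul_pos hNp huppow).ne']
      linear_combination ((c₀ ^ 2 - (γ - 1) / 2 * um ^ 2 - um ^ 2) *
        (c₀ ^ 2 - (γ - 1) / 2 * up ^ 2 - up ^ 2) / γ) * key
    constructor
    · rw [← hval]; exact hgder
    · rw [hsonm, hsonp]
      exact div_neg_of_neg_of_pos
        (mul_neg_of_neg_of_pos (by linarith) humpow)
        (mul_pos (by linarith) huppow)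
  refine ⟨main, ?_⟩
  apply strictAntiOn_of_deriv_neg (convex_Ioo _ _)
  · intro x hx
    exact (main x hx).1.continuousAt.continuousWithinAt
  · intro x hx
    rw [interior_Ioo] at hx
    rw [(main x hx).1.deriv]
    exact (main x hx).2
end

section
/- (Subsonic Cauchy problem.) Let θ₁ ∈ (π/2, π) and u₁ ∈ (0, c_*). Then there exists a unique C¹ function u : [π/2, θ₁] → ℝ with u(θ₁) = u₁, 0 < u(θ) < c_* for all θ, satisfying u′(θ) = cot θ·c(u(θ))²·u(θ)/(u(θ)² − c(u(θ))²) on [π/2, θ₁]; moreover u is strictly increasing on [π/2, θ₁]. -/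
open Real Set Filter Topology

set_option linter.unusedVariables false
set_option linter.unusedSectionVars false

/-- The derivative of the flux. -/
noncomputable def fluxD (γ c₀ u : ℝ) : ℝ :=
  dens γ c₀ u * (c₀ ^ 2 - (γ + 1) / 2 * u ^ 2) / (c₀ ^ 2 - (γ - 1) / 2 * u ^ 2)

lemma cStar_sq {γ c₀ : ℝ} (hγ : 1 < γ) (hc₀ : 0 < c₀) :
    cStar γ c₀ ^ 2 = 2 * c₀ ^ 2 / (γ + 1) :=
  Real.sq_sqrt (by positivity)

lemma cStar_pos {γ c₀ : ℝ} (hγ : 1 < γ) (hc₀ : 0 < c₀) : 0 < cStar γ c₀ :=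
  Real.sqrt_pos.2 (by positivity)

lemma base_lower {γ c₀ : ℝ} (hγ : 1 < γ) (hc₀ : 0 < c₀) {u : ℝ}
    (hu : u ^ 2 ≤ cStar γ c₀ ^ 2) :
    cStar γ c₀ ^ 2 ≤ c₀ ^ 2 - (γ - 1) / 2 * u ^ 2 := by
  rw [cStar_sq hγ hc₀] at *
  rw [le_div_iff₀ (by linarith : (0:ℝ) < γ + 1)] at hu
  rw [div_le_iff₀ (by linarith : (0:ℝ) < γ + 1)]
  nlinarith [sq_nonneg u, sq_nonneg c₀]

lemma base_pos {γ c₀ : ℝ} (hγ : 1 < γ) (hc₀ : 0 < c₀) {u : ℝ}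
    (hu : u ^ 2 ≤ cStar γ c₀ ^ 2) :
    0 < c₀ ^ 2 - (γ - 1) / 2 * u ^ 2 :=
  lt_of_lt_of_le (pow_pos (cStar_pos hγ hc₀) 2) (base_lower hγ hc₀ hu)

lemma dens_pos {γ c₀ : ℝ} (hγ : 1 < γ) {u : ℝ}
    (hb : 0 < c₀ ^ 2 - (γ - 1) / 2 * u ^ 2) : 0 < dens γ c₀ u :=
  Real.rpow_pos_of_pos (div_pos hb (by linarith)) _

lemma sonic_sq {γ c₀ u : ℝ} (hb : 0 ≤ c₀ ^ 2 - (γ - 1) / 2 * u ^ 2) :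
    sonic γ c₀ u ^ 2 = c₀ ^ 2 - (γ - 1) / 2 * u ^ 2 :=
  Real.sq_sqrt hb

lemma continuousAt_flux {γ c₀ : ℝ} (hγ : 1 < γ) (hc₀ : 0 < c₀) {u : ℝ}
    (hb : 0 < c₀ ^ 2 - (γ - 1) / 2 * u ^ 2) :
    ContinuousAt (flux γ c₀) u := by
  have h1 : ContinuousAt (fun u : ℝ => (c₀ ^ 2 - (γ - 1) / 2 * u ^ 2) / γ) u := by fun_prop
  have h2 : ContinuousAt (dens γ c₀) u :=
    h1.rpow_const (Or.inl (by positivity))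
  exact h2.mul continuousAt_id

lemma hasDerivAt_flux {γ c₀ : ℝ} (hγ : 1 < γ) (hc₀ : 0 < c₀) {u : ℝ}
    (hb : 0 < c₀ ^ 2 - (γ - 1) / 2 * u ^ 2) :
    HasDerivAt (flux γ c₀) (fluxD γ c₀ u) u := by
  have hγ0 : (0:ℝ) < γ := by linarith
  have hg : HasDerivAt (fun u : ℝ => (c₀ ^ 2 - (γ - 1) / 2 * u ^ 2) / γ)
      ((-(γ - 1) * u) / γ) u := by
    have h := (((hasDerivAt_pow 2 u).const_mul ((γ - 1) / 2)).const_sub (c₀ ^ 2)).div_const γ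
    exact h.congr_deriv (by ring)
  have hgpos : 0 < (c₀ ^ 2 - (γ - 1) / 2 * u ^ 2) / γ := div_pos hb hγ0
  have hρ : HasDerivAt (dens γ c₀)
      ((-(γ - 1) * u) / γ * ((1:ℝ) / (γ - 1)) *
        ((c₀ ^ 2 - (γ - 1) / 2 * u ^ 2) / γ) ^ ((1:ℝ) / (γ - 1) - 1)) u :=
    hg.rpow_const (Or.inl hgpos.ne')
  have hF := hρ.mul (hasDerivAt_id u)
  refine hF.congr_deriv ?_
  symm
  rw [id_eq]
  rw [Real.rpow_sub_one hgpos.ne']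
  have hd : ((c₀ ^ 2 - (γ - 1) / 2 * u ^ 2) / γ) ^ ((1:ℝ) / (γ - 1)) = dens γ c₀ u := rfl
  rw [hd]
  have h1 : γ ≠ 0 := by linarith
  have h2 : γ - 1 ≠ 0 := by linarith
  unfold fluxD
  rw [show c₀ ^ 2 - (γ + 1) / 2 * u ^ 2 = (c₀ ^ 2 - (γ - 1) / 2 * u ^ 2) - u ^ 2 by ring]
  generalize hBB : c₀ ^ 2 - (γ - 1) / 2 * u ^ 2 = B at hb ⊢
  field_simp [hb.ne']
  ring

lemma fluxD_pos {γ c₀ : ℝ} (hγ : 1 < γ) (hc₀ : 0 < c₀) {u : ℝ}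
    (hu : u ^ 2 < cStar γ c₀ ^ 2) : 0 < fluxD γ c₀ u := by
  have hb := base_pos hγ hc₀ hu.le
  have hnum : 0 < c₀ ^ 2 - (γ + 1) / 2 * u ^ 2 := by
    rw [cStar_sq hγ hc₀, lt_div_iff₀ (by linarith : (0:ℝ) < γ + 1)] at hu
    nlinarith
  exact div_pos (mul_pos (dens_pos hγ hb) hnum) hb

lemma strictMonoOn_flux {γ c₀ : ℝ} (hγ : 1 < γ) (hc₀ : 0 < c₀) :
    StrictMonoOn (flux γ c₀) (Icc 0 (cStar γ c₀)) := by
  apply strictMonoOn_of_deriv_pos (convex_Icc _ _)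
  · intro x hx
    have hx2 : x ^ 2 ≤ cStar γ c₀ ^ 2 := by
      have := hx.1; have := hx.2; nlinarith
    exact (continuousAt_flux hγ hc₀ (base_pos hγ hc₀ hx2)).continuousWithinAt
  · intro x hx
    rw [interior_Icc] at hx
    have hx2 : x ^ 2 < cStar γ c₀ ^ 2 := by
      have := hx.1; have := hx.2; nlinarith
    rw [(hasDerivAt_flux hγ hc₀ (base_pos hγ hc₀ hx2.le)).deriv]
    exact fluxD_pos hγ hc₀ hx2

lemma flux_zero (γ c₀ : ℝ) : flux γ c₀ 0 = 0 := by simp [flux]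


/-- clamp to `[0, b]`. -/
noncomputable def clampTo (b u : ℝ) : ℝ := max 0 (min u b)

/-- Globally defined strictly monotone extension of the flux beyond `[0, b]`. -/
noncomputable def Gext (γ c₀ b u : ℝ) : ℝ :=
  flux γ c₀ (clampTo b u) + min u 0 + max (u - b) 0

section GextLemmas

variable {γ c₀ b : ℝ}

lemma clampTo_mem (hb : 0 ≤ b) (u : ℝ) : clampTo b u ∈ Icc 0 b :=
  ⟨le_max_left _ _, max_le hb (min_le_right _ _)⟩

lemma Gext_eq {u : ℝ} (hu : u ∈ Icc 0 b) : Gext γ c₀ b u = flux γ c₀ u := by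
  unfold Gext clampTo
  rw [min_eq_left hu.2, max_eq_right hu.1, min_eq_right hu.1,
    max_eq_right (sub_nonpos.2 hu.2)]
  ring

lemma Gext_le0 (hb : 0 < b) {u : ℝ} (hu : u ≤ 0) : Gext γ c₀ b u = u := by
  unfold Gext clampTo
  rw [min_eq_left (hu.trans hb.le), max_eq_left hu, flux_zero, min_eq_left hu,
    max_eq_right (by linarith)]
  ring

lemma Gext_geb (hb : 0 ≤ b) {u : ℝ} (hu : b ≤ u) :
    Gext γ c₀ b u = flux γ c₀ b + (u - b) := by
  unfold Gext clampTo
  rw [min_eq_right hu, max_eq_right hb, min_eq_right (hb.trans hu),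
    max_eq_left (by linarith)]
  ring

variable (hγ : 1 < γ) (hc₀ : 0 < c₀) (hb : 0 < b) (hbs : b ≤ cStar γ c₀)
include hγ hc₀ hb hbs

lemma flux_b_pos : 0 < flux γ c₀ b := by
  have := strictMonoOn_flux hγ hc₀ (left_mem_Icc.2 (hb.le.trans hbs)) ⟨hb.le, hbs⟩ hb
  rwa [flux_zero] at this

lemma Gext_strictMono : StrictMono (Gext γ c₀ b) := by
  have hmem : ∀ x : ℝ, 0 ≤ x → x ≤ b → x ∈ Icc 0 (cStar γ c₀) :=
    fun x h1 h2 => ⟨h1, h2.trans hbs⟩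
  intro x y hxy
  rcases le_or_gt x 0 with hx0 | hx0
  · rcases le_or_gt y 0 with hy0 | hy0
    · rw [Gext_le0 hb hx0, Gext_le0 hb hy0]; exact hxy
    · rcases le_or_gt y b with hyb | hyb
      · rw [Gext_le0 hb hx0, Gext_eq ⟨hy0.le, hyb⟩]
        have : flux γ c₀ 0 < flux γ c₀ y :=
          strictMonoOn_flux hγ hc₀ (hmem 0 le_rfl hb.le) (hmem y hy0.le hyb) hy0
        rw [flux_zero] at this
        linarith
      · rw [Gext_le0 hb hx0, Gext_geb hb.le hyb.le]
        have := flux_b_pos hγ hc₀ hb hbs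
        linarith
  · rcases le_or_gt x b with hxb | hxb
    · rcases le_or_gt y b with hyb | hyb
      · rw [Gext_eq ⟨hx0.le, hxb⟩, Gext_eq ⟨(hx0.trans hxy).le, hyb⟩]
        exact strictMonoOn_flux hγ hc₀ (hmem x hx0.le hxb) (hmem y (hx0.trans hxy).le hyb) hxy
      · rw [Gext_eq ⟨hx0.le, hxb⟩, Gext_geb hb.le hyb.le]
        have : flux γ c₀ x ≤ flux γ c₀ b :=
          (strictMonoOn_flux hγ hc₀).monotoneOn (hmem x hx0.le hxb) (hmem b hb.le le_rfl) hxb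
        linarith
    · rw [Gext_geb hb.le hxb.le, Gext_geb hb.le (hxb.trans hxy).le]
      linarith

lemma Gext_continuous : Continuous (Gext γ c₀ b) := by
  have hflux : ContinuousOn (flux γ c₀) (Icc 0 (cStar γ c₀)) := by
    intro x hx
    have hx2 : x ^ 2 ≤ cStar γ c₀ ^ 2 := by
      have := hx.1; have := hx.2; nlinarith
    exact (continuousAt_flux hγ hc₀ (base_pos hγ hc₀ hx2)).continuousWithinAt
  have hclamp : Continuous (clampTo b) := by
    unfold clampTo; fun_prop
  have h1 : Continuous fun u => flux γ c₀ (clampTo b u) :=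
    hflux.comp_continuous hclamp fun x =>
      ⟨(clampTo_mem hb.le x).1, (clampTo_mem hb.le x).2.trans hbs⟩
  unfold Gext
  fun_prop

lemma Gext_surjective : Function.Surjective (Gext γ c₀ b) := by
  apply (Gext_continuous hγ hc₀ hb hbs).surjective
  · have h : Tendsto (fun u : ℝ => flux γ c₀ b + (u - b)) atTop atTop :=
      tendsto_atTop_add_const_left _ _ (tendsto_atTop_add_const_right _ _ tendsto_id)
    exact h.congr' (((eventually_ge_atTop b).mono fun u hu => (Gext_geb hb.le hu).symm))
  · have h : Tendsto (fun u : ℝ => u) atBot atBot := tendsto_id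
    exact h.congr' (((eventually_le_atBot (0:ℝ)).mono fun u hu => (Gext_le0 hb hu).symm))

end GextLemmas


lemma deriv_algebra1 {sθ cθ ρ B U K : ℝ} (hs : sθ ≠ 0) (hρ : ρ ≠ 0) (hB : B ≠ 0)
    (hUB : U ^ 2 - B ≠ 0) (hK : K = sθ * (ρ * U)) :
    cθ / sθ * B * U / (U ^ 2 - B) = (ρ * (B - U ^ 2) / B)⁻¹ * (-(K * cθ) / sθ ^ 2) := by
  have h2 : B - U ^ 2 ≠ 0 := fun h => hUB (by linarith)
  subst hK
  field_simp
  ring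

lemma deriv_algebra2 {sθ cθ ρ B U : ℝ} (hs : sθ ≠ 0) (hB : B ≠ 0) (hUB : U ^ 2 - B ≠ 0) :
    (0 : ℝ) = cθ * (ρ * U) + sθ * (ρ * (B - U ^ 2) / B * (cθ / sθ * B * U / (U ^ 2 - B))) := by
  have h2 : B - U ^ 2 ≠ 0 := fun h => hUB (by linarith)
  field_simp
  ring

lemma sin_strictAntiOn : StrictAntiOn Real.sin (Icc (π / 2) π) := by
  intro x hx y hy hxy
  have hx' : Real.sin x = Real.cos (x - π / 2) := by
    rw [← Real.sin_add_pi_div_two]; ring_nf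
  have hy' : Real.sin y = Real.cos (y - π / 2) := by
    rw [← Real.sin_add_pi_div_two]; ring_nf
  rw [hx', hy']
  have hpi := Real.pi_pos
  exact Real.strictAntiOn_cos ⟨by linarith [hx.1], by linarith [hx.2]⟩
    ⟨by linarith [hy.1], by linarith [hy.2]⟩ (by linarith)

set_option maxHeartbeats 1000000 in
/-- the subsonic Cauchy problem: for `θ₁ ∈ (π/2, π)` and `u₁ ∈ (0, c_*)`
there is a unique C¹ solution on `[π/2, θ₁]` of `u′ = cot θ · c(u)²u/(u² − c(u)²)` with
`u(θ₁) = u₁`, staying subsonic, and it is strictly increasing. -/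
theorem subsonic_cauchy_problem (γ c₀ θ₁ u₁ : ℝ) (hγ : 1 < γ) (hc₀ : 0 < c₀)
    (hθ₁ : θ₁ ∈ Set.Ioo (π / 2) π) (hu₁ : u₁ ∈ Set.Ioo 0 (cStar γ c₀)) :
    ∃ u : ℝ → ℝ,
      (ContDiffOn ℝ 1 u (Set.Icc (π / 2) θ₁) ∧
        u θ₁ = u₁ ∧
        (∀ θ ∈ Set.Icc (π / 2) θ₁, u θ ∈ Set.Ioo 0 (cStar γ c₀)) ∧
        (∀ θ ∈ Set.Icc (π / 2) θ₁,
          HasDerivWithinAt u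
            (Real.cot θ * sonic γ c₀ (u θ) ^ 2 * u θ / (u θ ^ 2 - sonic γ c₀ (u θ) ^ 2))
            (Set.Icc (π / 2) θ₁) θ)) ∧
      StrictMonoOn u (Set.Icc (π / 2) θ₁) ∧
      ∀ v : ℝ → ℝ,
        (ContDiffOn ℝ 1 v (Set.Icc (π / 2) θ₁) ∧
          v θ₁ = u₁ ∧
          (∀ θ ∈ Set.Icc (π / 2) θ₁, v θ ∈ Set.Ioo 0 (cStar γ c₀)) ∧
          (∀ θ ∈ Set.Icc (π / 2) θ₁,
            HasDerivWithinAt v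
              (Real.cot θ * sonic γ c₀ (v θ) ^ 2 * v θ / (v θ ^ 2 - sonic γ c₀ (v θ) ^ 2))
              (Set.Icc (π / 2) θ₁) θ)) →
        Set.EqOn u v (Set.Icc (π / 2) θ₁) := by
  obtain ⟨hθa, hθb⟩ := hθ₁
  obtain ⟨hu₁0, hu₁s⟩ := hu₁
  have hpi := Real.pi_pos
  set s := cStar γ c₀ with hs
  have hspos : 0 < s := cStar_pos hγ hc₀
  set b := (u₁ + s) / 2 with hbdef
  have hb0 : 0 < b := by rw [hbdef]; linarith
  have hu₁b : u₁ < b := by rw [hbdef]; linarith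
  have hbs : b < s := by rw [hbdef]; linarith
  have hsin₁ : 0 < Real.sin θ₁ := Real.sin_pos_of_pos_of_lt_pi (by linarith) hθb
  have hfluxu₁ : 0 < flux γ c₀ u₁ := by
    have h2 : u₁ ^ 2 ≤ s ^ 2 := by nlinarith
    exact mul_pos (dens_pos hγ (base_pos hγ hc₀ h2)) hu₁0
  set K := Real.sin θ₁ * flux γ c₀ u₁ with hK
  have hKpos : 0 < K := mul_pos hsin₁ hfluxu₁
  have hmono := Gext_strictMono hγ hc₀ hb0 hbs.le
  have hsurj := Gext_surjective hγ hc₀ hb0 hbs.le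
  set E := StrictMono.orderIsoOfSurjective _ hmono hsurj with hE
  have hleft : ∀ y, Gext γ c₀ b (E.symm y) = y := fun y =>
    StrictMono.orderIsoOfSurjective_self_symm_apply _ hmono hsurj y
  have hEsymmG : ∀ x, E.symm (Gext γ c₀ b x) = x := fun x =>
    StrictMono.orderIsoOfSurjective_symm_apply_self _ hmono hsurj x
  set u : ℝ → ℝ := fun θ => E.symm (K / Real.sin θ) with hu
  -- basic interval facts
  have hmemI : ∀ θ ∈ Icc (π / 2) θ₁, 0 < Real.sin θ ∧ Real.sin θ₁ ≤ Real.sin θ := by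
    intro θ hθ
    refine ⟨Real.sin_pos_of_pos_of_lt_pi (by linarith [hθ.1]) (lt_of_le_of_lt hθ.2 hθb), ?_⟩
    rcases eq_or_lt_of_le hθ.2 with h | h
    · rw [h]
    · exact (sin_strictAntiOn ⟨hθ.1, by linarith [hθ.2]⟩
        ⟨by linarith [hθ.1, hθ.2], hθb.le⟩ h).le
  have hy_pos : ∀ θ ∈ Icc (π / 2) θ₁, 0 < K / Real.sin θ := fun θ hθ =>
    div_pos hKpos (hmemI θ hθ).1
  have hKθ₁ : K / Real.sin θ₁ = flux γ c₀ u₁ := by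
    rw [hK]; exact mul_div_cancel_left₀ _ hsin₁.ne'
  have hy_le : ∀ θ ∈ Icc (π / 2) θ₁, K / Real.sin θ ≤ flux γ c₀ u₁ := by
    intro θ hθ
    rw [← hKθ₁]
    exact div_le_div_of_nonneg_left hKpos.le hsin₁ (hmemI θ hθ).2
  have hGu₁ : Gext γ c₀ b u₁ = flux γ c₀ u₁ := Gext_eq ⟨hu₁0.le, hu₁b.le⟩
  have hG0 : Gext γ c₀ b 0 = 0 := by
    rw [Gext_eq (left_mem_Icc.2 hb0.le), flux_zero]
  have hEs0 : E.symm 0 = 0 := by have := hEsymmG 0; rwa [hG0] at this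
  have hEsu₁ : E.symm (flux γ c₀ u₁) = u₁ := by
    have := hEsymmG u₁; rwa [hGu₁] at this
  have hu_mem : ∀ θ ∈ Icc (π / 2) θ₁, 0 < u θ ∧ u θ ≤ u₁ := by
    intro θ hθ
    constructor
    · have := E.symm.strictMono (hy_pos θ hθ)
      rwa [hEs0] at this
    · have := E.symm.monotone (hy_le θ hθ)
      rwa [hEsu₁] at this
  have huθ₁ : u θ₁ = u₁ := by
    show E.symm (K / Real.sin θ₁) = u₁
    rw [hKθ₁, hEsu₁]
  have hflux_u : ∀ θ ∈ Icc (π / 2) θ₁, flux γ c₀ (u θ) = K / Real.sin θ := by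
    intro θ hθ
    obtain ⟨h1, h2⟩ := hu_mem θ hθ
    rw [← Gext_eq ⟨h1.le, h2.trans hu₁b.le⟩]
    exact hleft _
  have humem' : ∀ θ ∈ Icc (π / 2) θ₁, u θ ∈ Ioo 0 s := by
    intro θ hθ
    exact ⟨(hu_mem θ hθ).1, lt_of_le_of_lt (hu_mem θ hθ).2 hu₁s⟩
  -- derivative of u
  have hDeriv : ∀ θ ∈ Icc (π / 2) θ₁, HasDerivAt u
      (Real.cot θ * sonic γ c₀ (u θ) ^ 2 * u θ / (u θ ^ 2 - sonic γ c₀ (u θ) ^ 2)) θ := by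
    intro θ hθ
    obtain ⟨hsθ, hsθ₁le⟩ := hmemI θ hθ
    obtain ⟨hu0, huu₁⟩ := hu_mem θ hθ
    have hub2 : u θ ^ 2 < s ^ 2 := by nlinarith
    have hbase : 0 < c₀ ^ 2 - (γ - 1) / 2 * u θ ^ 2 := base_pos hγ hc₀ hub2.le
    have hyd : HasDerivAt (fun t => K / Real.sin t) (-(K * Real.cos θ) / Real.sin θ ^ 2) θ := by
      have h := (hasDerivAt_const θ K).div (Real.hasDerivAt_sin θ) hsθ.ne'
      exact h.congr_deriv (by ring)
    have hnb : Ioo (0 : ℝ) b ∈ 𝓝 (u θ) :=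
      isOpen_Ioo.mem_nhds ⟨hu0, lt_of_le_of_lt huu₁ hu₁b⟩
    have hGF : Gext γ c₀ b =ᶠ[𝓝 (u θ)] flux γ c₀ :=
      eventuallyEq_of_mem hnb fun x hx => Gext_eq ⟨hx.1.le, hx.2.le⟩
    have hGd : HasDerivAt (Gext γ c₀ b) (fluxD γ c₀ (u θ)) (u θ) :=
      (hasDerivAt_flux hγ hc₀ hbase).congr_of_eventuallyEq hGF
    have hfd_pos := fluxD_pos hγ hc₀ hub2
    have hsymm_cont : ContinuousAt (⇑E.symm) (K / Real.sin θ) :=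
      (OrderIso.continuous E.symm).continuousAt
    have hinv : HasDerivAt (⇑E.symm) (fluxD γ c₀ (u θ))⁻¹ (K / Real.sin θ) :=
      HasDerivAt.of_local_left_inverse hsymm_cont hGd hfd_pos.ne'
        (Eventually.of_forall hleft)
    have hcomp : HasDerivAt u
        ((fluxD γ c₀ (u θ))⁻¹ * (-(K * Real.cos θ) / Real.sin θ ^ 2)) θ :=
      hinv.comp θ hyd
    convert hcomp using 1
    have hson : sonic γ c₀ (u θ) ^ 2 = c₀ ^ 2 - (γ - 1) / 2 * u θ ^ 2 := sonic_sq hbase.le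
    have hKval : K = Real.sin θ * (dens γ c₀ (u θ) * u θ) := by
      have h5 := hflux_u θ hθ
      rw [flux] at h5
      rw [h5, mul_div_cancel₀ _ hsθ.ne']
    have hnum : 0 < c₀ ^ 2 - (γ + 1) / 2 * u θ ^ 2 := by
      rw [cStar_sq hγ hc₀, lt_div_iff₀ (by linarith : (0:ℝ) < γ + 1)] at hub2
      nlinarith
    have hρ : 0 < dens γ c₀ (u θ) := dens_pos hγ hbase
    have hd1 : u θ ^ 2 - (c₀ ^ 2 - (γ - 1) / 2 * u θ ^ 2) ≠ 0 := by nlinarith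
    have hfd : fluxD γ c₀ (u θ) = dens γ c₀ (u θ) *
        ((c₀ ^ 2 - (γ - 1) / 2 * u θ ^ 2) - u θ ^ 2) / (c₀ ^ 2 - (γ - 1) / 2 * u θ ^ 2) := by
      unfold fluxD
      rw [show c₀ ^ 2 - (γ + 1) / 2 * u θ ^ 2
          = (c₀ ^ 2 - (γ - 1) / 2 * u θ ^ 2) - u θ ^ 2 by ring]
    rw [Real.cot_eq_cos_div_sin, hson, hfd]
    exact deriv_algebra1 hsθ.ne' hρ.ne' hbase.ne' hd1 hKval
  -- the ODE within the interval
  have hODE : ∀ θ ∈ Icc (π / 2) θ₁, HasDerivWithinAt u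
      (Real.cot θ * sonic γ c₀ (u θ) ^ 2 * u θ / (u θ ^ 2 - sonic γ c₀ (u θ) ^ 2))
      (Icc (π / 2) θ₁) θ := fun θ hθ => (hDeriv θ hθ).hasDerivWithinAt
  have hIuniq : UniqueDiffOn ℝ (Icc (π / 2) θ₁) := uniqueDiffOn_Icc (by linarith)
  have hcontu : ContinuousOn u (Icc (π / 2) θ₁) := fun θ hθ =>
    (hDeriv θ hθ).continuousAt.continuousWithinAt
  have hsonic_cont : Continuous (sonic γ c₀) := by
    unfold sonic
    exact Real.continuous_sqrt.comp (by fun_prop)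
  have hcontRHS : ContinuousOn
      (fun θ => Real.cot θ * sonic γ c₀ (u θ) ^ 2 * u θ / (u θ ^ 2 - sonic γ c₀ (u θ) ^ 2))
      (Icc (π / 2) θ₁) := by
    apply ContinuousOn.div
    · refine ContinuousOn.mul (ContinuousOn.mul ?_ ((hsonic_cont.comp_continuousOn hcontu).pow 2)) hcontu
      refine ContinuousOn.congr (Real.continuous_cos.continuousOn.div
        Real.continuous_sin.continuousOn fun θ hθ => (hmemI θ hθ).1.ne') ?_
      intro θ _
      exact Real.cot_eq_cos_div_sin θ
    · exact (hcontu.pow 2).sub ((hsonic_cont.comp_continuousOn hcontu).pow 2)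
    · intro θ hθ
      have hub2 : u θ ^ 2 < s ^ 2 := by
        obtain ⟨h1, h2⟩ := hu_mem θ hθ; nlinarith
      have hbase : 0 < c₀ ^ 2 - (γ - 1) / 2 * u θ ^ 2 := base_pos hγ hc₀ hub2.le
      have hson : sonic γ c₀ (u θ) ^ 2 = c₀ ^ 2 - (γ - 1) / 2 * u θ ^ 2 := sonic_sq hbase.le
      have hnum : 0 < c₀ ^ 2 - (γ + 1) / 2 * u θ ^ 2 := by
        rw [cStar_sq hγ hc₀, lt_div_iff₀ (by linarith : (0:ℝ) < γ + 1)] at hub2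
        nlinarith
      rw [hson]
      nlinarith
  have hCD : ContDiffOn ℝ 1 u (Icc (π / 2) θ₁) := by
    have h01 : ((1 : ℕ) : WithTop ℕ∞) = 0 + 1 := by norm_num
    rw [show (1 : WithTop ℕ∞) = 0 + 1 by norm_num]
    rw [contDiffOn_succ_iff_derivWithin hIuniq]
    refine ⟨fun θ hθ => (hDeriv θ hθ).differentiableAt.differentiableWithinAt, by simp, ?_⟩
    rw [contDiffOn_zero]
    exact hcontRHS.congr fun θ hθ => (hODE θ hθ).derivWithin (hIuniq θ hθ)
  -- strict monotonicity
  have hSM : StrictMonoOn u (Icc (π / 2) θ₁) := by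
    intro x hx y hy hxy
    have hsx := hmemI x hx
    have hsy := hmemI y hy
    have hss : Real.sin y < Real.sin x :=
      sin_strictAntiOn ⟨hx.1, by linarith [hx.2]⟩ ⟨by linarith [hy.1], by linarith [hy.2]⟩ hxy
    have : K / Real.sin x < K / Real.sin y :=
      div_lt_div_of_pos_left hKpos hsy.1 hss
    exact E.symm.strictMono this
  refine ⟨u, ⟨hCD, huθ₁, humem', hODE⟩, hSM, ?_⟩
  -- uniqueness
  rintro v ⟨hv1, hv2, hv3, hv4⟩
  have hv_base : ∀ t ∈ Icc (π / 2) θ₁, 0 < c₀ ^ 2 - (γ - 1) / 2 * v t ^ 2 := by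
    intro t ht
    obtain ⟨h1, h2⟩ := hv3 t ht
    exact base_pos hγ hc₀ (by nlinarith)
  have hhd : ∀ t ∈ Icc (π / 2) θ₁,
      HasDerivWithinAt (fun t => Real.sin t * flux γ c₀ (v t)) 0 (Icc (π / 2) θ₁) t := by
    intro t ht
    have hb' := hv_base t ht
    obtain ⟨hst, hst₁⟩ := hmemI t ht
    obtain ⟨hv0, hvs⟩ := hv3 t ht
    have h1 : HasDerivWithinAt (fun t => flux γ c₀ (v t))
        (fluxD γ c₀ (v t) *
          (Real.cot t * sonic γ c₀ (v t) ^ 2 * v t / (v t ^ 2 - sonic γ c₀ (v t) ^ 2)))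
        (Icc (π / 2) θ₁) t :=
      (hasDerivAt_flux hγ hc₀ hb').comp_hasDerivWithinAt t (hv4 t ht)
    have h2 := ((Real.hasDerivAt_sin t).hasDerivWithinAt).mul h1
    refine h2.congr_deriv ?_
    symm
    have hson : sonic γ c₀ (v t) ^ 2 = c₀ ^ 2 - (γ - 1) / 2 * v t ^ 2 := sonic_sq hb'.le
    have hvb2 : v t ^ 2 < s ^ 2 := by nlinarith
    have hnum : 0 < c₀ ^ 2 - (γ + 1) / 2 * v t ^ 2 := by
      rw [cStar_sq hγ hc₀, lt_div_iff₀ (by linarith : (0:ℝ) < γ + 1)] at hvb2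
      nlinarith
    have hd1 : v t ^ 2 - (c₀ ^ 2 - (γ - 1) / 2 * v t ^ 2) ≠ 0 := by nlinarith
    have hfd : fluxD γ c₀ (v t) = dens γ c₀ (v t) *
        ((c₀ ^ 2 - (γ - 1) / 2 * v t ^ 2) - v t ^ 2) / (c₀ ^ 2 - (γ - 1) / 2 * v t ^ 2) := by
      unfold fluxD
      rw [show c₀ ^ 2 - (γ + 1) / 2 * v t ^ 2
          = (c₀ ^ 2 - (γ - 1) / 2 * v t ^ 2) - v t ^ 2 by ring]
    rw [Real.cot_eq_cos_div_sin, hson, hfd, flux]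
    exact deriv_algebra2 hst.ne' hb'.ne' hd1
  have hhcont : ContinuousOn (fun t => Real.sin t * flux γ c₀ (v t)) (Icc (π / 2) θ₁) := by
    refine Real.continuous_sin.continuousOn.mul ?_
    intro t ht
    exact (continuousAt_flux hγ hc₀ (hv_base t ht)).comp_continuousWithinAt
      (hv1.continuousOn t ht)
  have hconst := constant_of_has_deriv_right_zero (f := fun t => Real.sin t * flux γ c₀ (v t))
    (a := π / 2) (b := θ₁) hhcont ?_
  swap
  · intro x hx
    have hmem : Icc (π / 2) θ₁ ∈ 𝓝[Ici x] x :=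
      mem_nhdsWithin.2 ⟨Iio θ₁, isOpen_Iio, hx.2,
        fun t ⟨ht1, ht2⟩ => ⟨le_trans hx.1 ht2, ht1.le⟩⟩
    exact (hhd x ⟨hx.1, hx.2.le⟩).mono_of_mem_nhdsWithin hmem
  intro θ hθ
  have hKv : Real.sin θ * flux γ c₀ (v θ) = K := by
    have e1 := hconst θ hθ
    have e2 := hconst θ₁ (right_mem_Icc.2 (by linarith))
    rw [hv2] at e2
    rw [hK, e1, ← e2]
  have hsθ := (hmemI θ hθ).1
  have hfv : flux γ c₀ (v θ) = K / Real.sin θ := by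
    rw [eq_div_iff hsθ.ne']
    linarith [hKv]
  have hfu := hflux_u θ hθ
  apply (strictMonoOn_flux hγ hc₀).injOn ?_ ?_ (hfu.trans hfv.symm)
  · exact ⟨(hu_mem θ hθ).1.le, le_trans (hu_mem θ hθ).2 hu₁s.le⟩
  · exact ⟨(hv3 θ hθ).1.le, (hv3 θ hθ).2.le⟩
end
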